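/- arXiv:1305.2543 — 3 statements merged into one kernel-verified Lean document; each statement's English description precedes it below -/
import Mathlib

section
/- Let l, d, k be positive integers with k dividing l, l dividing d·k, and d ≤ l. Set c = l/k and t = d·k/l. Then the number of orbits of size exactly k of the shift map σ on d-element subsets of ZMod l equals the number of orbits of size exactly k of the shift map on t-element subsets of ZMod k. -/
/-- The shift map on finsets of `ZMod m`. -/
def sh (m : ℕ) (A : Finset (ZMod m)) : Finset (ZMod m) := A.image (· + 1)

/-- The orbit of a finset `A` of `ZMod m` under the shift map (note `(sh m)^[m] = id`). -/
def shOrbit (m : ℕ) [NeZero m] (A : Finset (ZMod m)) : Finset (Finset (ZMod m)) :=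
  (Finset.range m).image (fun i => (sh m)^[i] A)

/-- The number of orbits of size exactly `k` of the shift map on `d`-element subsets
of `ZMod m`. -/
def norb (m d k : ℕ) [NeZero m] : ℕ :=
  (((Finset.univ.filter (fun A : Finset (ZMod m) => A.card = d)).image
      (shOrbit m)).filter (fun O => O.card = k)).card

section aux

lemma sh_injective (m : ℕ) : Function.Injective (sh m) :=
  Finset.image_injective (add_left_injective (1 : ZMod m))

lemma sh_iterate (m i : ℕ) (A : Finset (ZMod m)) :
    (sh m)^[i] A = A.image (· + (i : ZMod m)) := by
  induction i with
  | zero => simp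
  | succ n ih =>
    rw [Function.iterate_succ_apply', ih, sh, Finset.image_image]
    push_cast
    congr 1
    funext x
    simp [add_assoc]

lemma sh_iterate_card (m i : ℕ) (A : Finset (ZMod m)) :
    ((sh m)^[i] A).card = A.card := by
  rw [sh_iterate]
  exact Finset.card_image_of_injective _ (add_left_injective _)

lemma sh_periodic (m : ℕ) [NeZero m] (A : Finset (ZMod m)) :
    Function.IsPeriodicPt (sh m) m A := by
  show (sh m)^[m] A = A
  rw [sh_iterate]
  simp [ZMod.natCast_self]

lemma minper_dvd (m : ℕ) [NeZero m] (A : Finset (ZMod m)) :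
    Function.minimalPeriod (sh m) A ∣ m :=
  (sh_periodic m A).minimalPeriod_dvd

lemma minper_pos (m : ℕ) [NeZero m] (A : Finset (ZMod m)) :
    0 < Function.minimalPeriod (sh m) A :=
  (sh_periodic m A).minimalPeriod_pos (Nat.pos_of_ne_zero (NeZero.ne m))

lemma shOrbit_eq_range_minper (m : ℕ) [NeZero m] (A : Finset (ZMod m)) :
    shOrbit m A =
      (Finset.range (Function.minimalPeriod (sh m) A)).image (fun i => (sh m)^[i] A) := by
  set p := Function.minimalPeriod (sh m) A with hp
  have hpm : p ≤ m := Nat.le_of_dvd (Nat.pos_of_ne_zero (NeZero.ne m)) (minper_dvd m A)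
  apply Finset.Subset.antisymm
  · intro O hO
    rw [shOrbit, Finset.mem_image] at hO
    obtain ⟨i, _, rfl⟩ := hO
    rw [Finset.mem_image]
    exact ⟨i % p, Finset.mem_range.2 (Nat.mod_lt _ (minper_pos m A)),
      Function.iterate_mod_minimalPeriod_eq⟩
  · exact Finset.image_subset_image (Finset.range_subset_range.2 hpm)

lemma shOrbit_card (m : ℕ) [NeZero m] (A : Finset (ZMod m)) :
    (shOrbit m A).card = Function.minimalPeriod (sh m) A := by
  rw [shOrbit_eq_range_minper]
  rw [Finset.card_image_of_injOn, Finset.card_range]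
  intro i hi j hj hij
  exact Function.iterate_injOn_Iio_minimalPeriod
    (Set.mem_Iio.2 (Finset.mem_range.1 (Finset.mem_coe.1 hi)))
    (Set.mem_Iio.2 (Finset.mem_range.1 (Finset.mem_coe.1 hj))) hij

variable {l k : ℕ} [NeZero l] [NeZero k] (hkl : k ∣ l)

/-- Pullback of a finset of `ZMod k` along the natural projection `ZMod l → ZMod k`. -/
noncomputable def pb (hkl : k ∣ l) (B : Finset (ZMod k)) : Finset (ZMod l) :=
  Finset.univ.filter (fun x => ZMod.castHom hkl (ZMod k) x ∈ B)

lemma mem_pb {B : Finset (ZMod k)} {x : ZMod l} :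
    x ∈ pb hkl B ↔ ZMod.castHom hkl (ZMod k) x ∈ B := by
  rw [pb, Finset.mem_filter]; simp

lemma pb_injective : Function.Injective (pb hkl) := by
  have hsurj : Function.Surjective (ZMod.castHom hkl (ZMod k)) := by
    intro b
    refine ⟨(b.val : ZMod l), ?_⟩
    rw [map_natCast]
    exact ZMod.natCast_zmod_val b
  intro B B' h
  ext b
  obtain ⟨x, rfl⟩ := hsurj b
  rw [← mem_pb hkl, ← mem_pb hkl, h]

lemma pb_sh (B : Finset (ZMod k)) : pb hkl (sh k B) = sh l (pb hkl B) := by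
  ext x
  constructor
  · intro hx
    rw [mem_pb, sh, Finset.mem_image] at hx
    obtain ⟨b, hb, hbx⟩ := hx
    rw [sh, Finset.mem_image]
    refine ⟨x - 1, ?_, by ring⟩
    rw [mem_pb, map_sub, map_one, ← hbx]
    simpa using hb
  · intro hx
    rw [sh, Finset.mem_image] at hx
    obtain ⟨y, hy, rfl⟩ := hx
    rw [mem_pb] at hy
    rw [mem_pb, sh, Finset.mem_image, map_add, map_one]
    exact ⟨_, hy, rfl⟩

lemma pb_sh_iterate (i : ℕ) (B : Finset (ZMod k)) :
    pb hkl ((sh k)^[i] B) = (sh l)^[i] (pb hkl B) := by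
  induction i with
  | zero => rfl
  | succ n ih => rw [Function.iterate_succ_apply', Function.iterate_succ_apply', pb_sh, ih]

lemma pb_periodic_iff (n : ℕ) (B : Finset (ZMod k)) :
    Function.IsPeriodicPt (sh l) n (pb hkl B) ↔ Function.IsPeriodicPt (sh k) n B := by
  constructor
  · intro h
    have : pb hkl ((sh k)^[n] B) = pb hkl B := by
      rw [pb_sh_iterate]; exact h
    exact pb_injective hkl this
  · intro h
    show (sh l)^[n] (pb hkl B) = pb hkl B
    rw [← pb_sh_iterate, h]

lemma pb_minper (B : Finset (ZMod k)) :
    Function.minimalPeriod (sh l) (pb hkl B) = Function.minimalPeriod (sh k) B := by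
  apply le_antisymm
  · exact Function.IsPeriodicPt.minimalPeriod_le (minper_pos k B)
      ((pb_periodic_iff hkl _ B).2 (Function.isPeriodicPt_minimalPeriod _ _))
  · exact Function.IsPeriodicPt.minimalPeriod_le (minper_pos l (pb hkl B))
      ((pb_periodic_iff hkl _ (B)).1 (Function.isPeriodicPt_minimalPeriod _ _))

lemma fiber_card (b : ZMod k) :
    (Finset.univ.filter (fun x : ZMod l => ZMod.castHom hkl (ZMod k) x = b)).card = l / k := by
  -- all fibers have equal cardinality
  have hconst : ∀ b b' : ZMod k,
      (Finset.univ.filter (fun x : ZMod l => ZMod.castHom hkl (ZMod k) x = b)).card =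
      (Finset.univ.filter (fun x : ZMod l => ZMod.castHom hkl (ZMod k) x = b')).card := by
    intro b b'
    have hsurj : ∀ c : ZMod k, ∃ w : ZMod l, ZMod.castHom hkl (ZMod k) w = c := by
      intro c
      exact ⟨(c.val : ZMod l), by rw [map_natCast]; exact ZMod.natCast_zmod_val c⟩
    obtain ⟨w, hw⟩ := hsurj (b' - b)
    apply Finset.card_bij (fun x _ => x + w)
    · intro x hx
      simp only [Finset.mem_filter, Finset.mem_univ, true_and] at hx ⊢
      rw [map_add, hx, hw]; ring
    · intro x hx y hy hxy
      exact add_right_cancel hxy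
    · intro y hy
      simp only [Finset.mem_filter, Finset.mem_univ, true_and] at hy
      refine ⟨y - w, ?_, by ring⟩
      simp only [Finset.mem_filter, Finset.mem_univ, true_and]
      rw [map_sub, hy, hw]; ring
  have hsum : (Finset.univ : Finset (ZMod l)).card =
      ∑ b' : ZMod k,
        (Finset.univ.filter (fun x : ZMod l => ZMod.castHom hkl (ZMod k) x = b')).card :=
    Finset.card_eq_sum_card_fiberwise (fun x _ => Finset.mem_univ _)
  have hl : (Finset.univ : Finset (ZMod l)).card = l := by
    simp [ZMod.card]
  rw [hl] at hsum
  have hsum2 : (∑ b' : ZMod k,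
      (Finset.univ.filter (fun x : ZMod l => ZMod.castHom hkl (ZMod k) x = b')).card) =
      (Finset.univ.filter (fun x : ZMod l => ZMod.castHom hkl (ZMod k) x = b)).card * k := by
    rw [Finset.sum_congr rfl (fun b' _ => hconst b' b)]
    simp [Finset.sum_const, ZMod.card, mul_comm]
  have hlk := hsum.trans hsum2
  exact (Nat.div_eq_of_eq_mul_left (Nat.pos_of_ne_zero (NeZero.ne k)) hlk).symm

lemma pb_card (B : Finset (ZMod k)) : (pb hkl B).card = (l / k) * B.card := by
  have : pb hkl B = B.biUnion
      (fun b => Finset.univ.filter (fun x : ZMod l => ZMod.castHom hkl (ZMod k) x = b)) := by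
    ext x
    rw [pb, Finset.mem_filter]; simp [Finset.mem_biUnion, eq_comm]
  rw [this, Finset.card_biUnion]
  · rw [Finset.sum_congr rfl (fun b _ => fiber_card hkl b), Finset.sum_const, smul_eq_mul,
      mul_comm]
  · intro b hb b' hb' hbb'
    apply Finset.disjoint_left.2
    intro x hx hx'
    simp only [Finset.mem_filter] at hx hx'
    exact hbb' (hx.2 ▸ hx'.2 ▸ rfl)

lemma sh_iterate_mul (m : ℕ) [NeZero m] (n : ℕ) (B : Finset (ZMod m)) :
    (sh m)^[m * n] B = B := by
  induction n with
  | zero => rfl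
  | succ n ih =>
    rw [Nat.mul_succ, Function.iterate_add_apply, show (sh m)^[m] B = B from sh_periodic m B, ih]

lemma sh_iterate_mod (m : ℕ) [NeZero m] (i : ℕ) (B : Finset (ZMod m)) :
    (sh m)^[i] B = (sh m)^[i % m] B := by
  conv_lhs => rw [← Nat.mod_add_div i m]
  rw [Function.iterate_add_apply, sh_iterate_mul]

lemma shOrbit_pb (hl : k ≤ l) (B : Finset (ZMod k)) :
    shOrbit l (pb hkl B) = (shOrbit k B).image (pb hkl) := by
  apply Finset.Subset.antisymm
  · intro O hO
    rw [shOrbit, Finset.mem_image] at hO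
    obtain ⟨i, _, rfl⟩ := hO
    rw [Finset.mem_image]
    refine ⟨(sh k)^[i % k] B, ?_, ?_⟩
    · rw [shOrbit, Finset.mem_image]
      exact ⟨i % k, Finset.mem_range.2 (Nat.mod_lt _ (Nat.pos_of_ne_zero (NeZero.ne k))), rfl⟩
    · rw [← sh_iterate_mod]
      exact pb_sh_iterate hkl i B
  · intro O hO
    rw [Finset.mem_image] at hO
    obtain ⟨C, hC, rfl⟩ := hO
    rw [shOrbit, Finset.mem_image] at hC
    obtain ⟨i, hi, rfl⟩ := hC
    rw [shOrbit, Finset.mem_image]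
    exact ⟨i, Finset.mem_range.2 (lt_of_lt_of_le (Finset.mem_range.1 hi) hl),
      (pb_sh_iterate hkl i B).symm⟩

/-- A set with `sh^[k] A = A` is a pullback. -/
lemma exists_pb_of_periodic (A : Finset (ZMod l)) (hA : (sh l)^[k] A = A) :
    ∃ B : Finset (ZMod k), pb hkl B = A := by
  refine ⟨A.image (ZMod.castHom hkl (ZMod k)), ?_⟩
  -- A is invariant under adding multiples of k
  have hmul : ∀ j : ℕ, ∀ a ∈ A, a + (j * k : ℕ) ∈ A := by
    intro j
    induction j with
    | zero => intro a ha; simpa using ha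
    | succ n ih =>
      intro a ha
      have h1 : a + (n * k : ℕ) ∈ A := ih a ha
      have h2 : (a + (n * k : ℕ)) + (k : ZMod l) ∈ A := by
        have := hA
        rw [sh_iterate] at this
        rw [← this, Finset.mem_image]
        exact ⟨a + (n * k : ℕ), h1, rfl⟩
      have : a + ((n + 1) * k : ℕ) = (a + (n * k : ℕ)) + (k : ZMod l) := by
        push_cast; ring
      rw [this]
      exact h2
  ext x
  rw [mem_pb, Finset.mem_image]
  constructor
  · rintro ⟨a, ha, hax⟩
    -- π (x - a) = 0, so x - a = j * k for some j
    have h0 : ZMod.castHom hkl (ZMod k) (x - a) = 0 := by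
      rw [map_sub, hax, sub_self]
    have hval : ((x - a).val : ZMod k) = 0 := by
      rw [ZMod.natCast_val, ← ZMod.castHom_apply (R := ZMod k) (h := hkl) (x - a), h0]
    have hdvd : k ∣ (x - a).val := (ZMod.natCast_eq_zero_iff ..).1 hval
    obtain ⟨j, hj⟩ := hdvd
    have hcast : ((k * j : ℕ) : ZMod l) = x - a := by
      rw [← hj]; exact ZMod.natCast_zmod_val _
    have hx : x = a + ((j * k : ℕ) : ZMod l) := by
      push_cast at hcast ⊢
      linear_combination -hcast
    rw [hx]
    exact hmul j a ha
  · intro hx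
    exact ⟨x, hx, rfl⟩

end aux

/-- Reduction lemma: the number of orbits of size exactly `k` on `d`-subsets of
`ZMod l` equals the number of orbits of size exactly `k` on `t`-subsets of
`ZMod k`, where `t = d * k / l`. -/
theorem norb_reduction (l d k : ℕ) [NeZero l] [NeZero k] (hd : 0 < d) (hk : 0 < k)
    (hdl : d ≤ l) (hkl : k ∣ l) (hld : l ∣ d * k) :
    norb l d k = norb k (d * k / l) k := by
  have hl : 0 < l := Nat.pos_of_ne_zero (NeZero.ne l)
  set c := l / k with hc
  set t := d * k / l with ht
  have hck : c * k = l := Nat.div_mul_cancel hkl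
  have htl : t * l = d * k := Nat.div_mul_cancel hld
  have hct : c * t = d := by
    have : (c * t) * k = d * k := by
      calc (c * t) * k = t * (c * k) := by ring
        _ = t * l := by rw [hck]
        _ = d * k := htl
    exact Nat.eq_of_mul_eq_mul_right hk this
  have hkle : k ≤ l := Nat.le_of_dvd hl hkl
  have hcpos : 0 < c := Nat.div_pos hkle hk
  unfold norb
  symm
  apply Finset.card_bij (fun O _ => O.image (pb hkl))
  · -- maps into target
    intro O hO
    simp only [Finset.mem_filter, Finset.mem_image] at hO ⊢
    obtain ⟨⟨B, hB, rfl⟩, hcard⟩ := hO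
    simp only [Finset.mem_filter, Finset.mem_univ, true_and] at hB
    constructor
    · refine ⟨pb hkl B, ?_, shOrbit_pb hkl hkle B⟩
      simp only [Finset.mem_filter, Finset.mem_univ, true_and]
      rw [pb_card hkl, hB]
      exact hct
    · rw [← shOrbit_pb hkl hkle B]
      rw [shOrbit_card] at hcard ⊢
      rw [pb_minper hkl, hcard]
  · -- injective
    intro O hO O' hO' h
    exact Finset.image_injective (pb_injective hkl) h
  · -- surjective
    intro O hO
    simp only [Finset.mem_filter, Finset.mem_image] at hO
    obtain ⟨⟨A, hA, rfl⟩, hcard⟩ := hO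
    simp only [Finset.mem_filter, Finset.mem_univ, true_and] at hA
    -- minimal period of A is k
    have hmp : Function.minimalPeriod (sh l) A = k := by
      rw [← shOrbit_card]; exact hcard
    have hper : (sh l)^[k] A = A := by
      have := Function.isPeriodicPt_minimalPeriod (sh l) A
      rw [hmp] at this
      exact this
    obtain ⟨B, hBA⟩ := exists_pb_of_periodic hkl A hper
    refine ⟨shOrbit k B, ?_, ?_⟩
    · simp only [Finset.mem_filter, Finset.mem_image]
      constructor
      · refine ⟨B, ?_, rfl⟩
        simp only [Finset.mem_filter, Finset.mem_univ, true_and]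
        have : (pb hkl B).card = c * B.card := pb_card hkl B
        rw [hBA, hA] at this
        have : c * B.card = c * t := by rw [← this, hct]
        exact Nat.eq_of_mul_eq_mul_left hcpos this
      · rw [shOrbit_card, ← pb_minper hkl, hBA, hmp]
    · rw [← shOrbit_pb hkl hkle B, hBA]
end

section
/- Let k, t be positive integers with t ≤ k, and let a be a common divisor of k and t. The number of t-element subsets A of ZMod k with 0 ∈ A that are invariant under translation by k/a (i.e., {x + k/a : x ∈ A} = A) equals the binomial coefficient C(k/a − 1, t/a − 1). -/
open Finset

section Aux

variable {k : ℕ} [NeZero k]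

private lemma aux_fiber_card {d a : ℕ} (hk : k = d * a) {c : ℕ} (hc : c < d) :
    (Finset.univ.filter (fun x : ZMod k => x.val % d = c)).card = a := by
  have hd : 0 < d := lt_of_le_of_lt (Nat.zero_le c) hc
  rw [← Finset.card_range a]
  refine Finset.card_nbij' (fun x => x.val / d) (fun m => ((c + m * d : ℕ) : ZMod k)) ?_ ?_ ?_ ?_
  · intro x hx
    have h1 : x.val < d * a := hk ▸ ZMod.val_lt x
    simp only [Finset.mem_coe, Finset.mem_range]
    exact Nat.div_lt_of_lt_mul h1
  · intro m hm
    simp only [Finset.mem_coe, Finset.mem_range] at hm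
    have hlt : c + m * d < k := by
      rw [hk]; nlinarith
    simp only [Finset.mem_coe, Finset.mem_filter, Finset.mem_univ, true_and]
    rw [ZMod.val_cast_of_lt hlt, Nat.add_mul_mod_self_right, Nat.mod_eq_of_lt hc]
  · intro x hx
    simp only [Finset.mem_coe, Finset.mem_filter, Finset.mem_univ, true_and] at hx
    show ((c + x.val / d * d : ℕ) : ZMod k) = x
    rw [← hx, Nat.mod_add_div']
    exact ZMod.natCast_rightInverse x
  · intro m hm
    simp only [Finset.mem_coe, Finset.mem_range] at hm
    have hlt : c + m * d < k := by rw [hk]; nlinarith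
    show ((c + m * d : ℕ) : ZMod k).val / d = m
    rw [ZMod.val_cast_of_lt hlt, Nat.add_mul_div_right _ _ hd, Nat.div_eq_of_lt hc, Nat.zero_add]

private lemma aux_card_filter {d a : ℕ} (hk : k = d * a) (C : Finset ℕ)
    (hC : C ⊆ Finset.range d) :
    (Finset.univ.filter (fun x : ZMod k => x.val % d ∈ C)).card = a * C.card := by
  rw [Finset.card_eq_sum_card_fiberwise (s := Finset.univ.filter (fun x : ZMod k => x.val % d ∈ C)) (f := fun x : ZMod k => x.val % d) (t := C)
    (fun x hx => (Finset.mem_filter.mp hx).2)]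
  rw [Finset.sum_congr rfl (fun c hc => ?_), Finset.sum_const, smul_eq_mul, mul_comm]
  rw [Finset.filter_filter]
  have hcd : c < d := Finset.mem_range.mp (hC hc)
  have heq : Finset.filter (fun x : ZMod k => x.val % d ∈ C ∧ x.val % d = c) Finset.univ
      = Finset.filter (fun x : ZMod k => x.val % d = c) Finset.univ := by
    ext x
    simp only [Finset.mem_filter, Finset.mem_univ, true_and]
    exact ⟨fun h => h.2, fun h => ⟨h ▸ hc, h⟩⟩
  rw [heq]
  exact aux_fiber_card hk hcd

private lemma aux_mem_shift {d a : ℕ} (hk : k = d * a) {A : Finset (ZMod k)}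
    (hA : A.image (· + ((d : ℕ) : ZMod k)) = A) (x : ZMod k) :
    x ∈ A ↔ ((x.val % d : ℕ) : ZMod k) ∈ A := by
  have step : ∀ y : ZMod k, y ∈ A ↔ y + ((d : ℕ) : ZMod k) ∈ A := by
    intro y
    constructor
    · intro hy; rw [← hA]; exact Finset.mem_image_of_mem _ hy
    · intro hy
      rw [← hA] at hy
      obtain ⟨z, hz, hzy⟩ := Finset.mem_image.mp hy
      have : z = y := by
        have := add_right_cancel hzy
        exact this
      exact this ▸ hz
  have key : ∀ m n : ℕ, ((n : ZMod k) ∈ A ↔ ((n + m * d : ℕ) : ZMod k) ∈ A) := by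
    intro m
    induction m with
    | zero => intro n; simp
    | succ m ih =>
      intro n
      rw [ih n, step]
      have : ((n + m * d : ℕ) : ZMod k) + ((d : ℕ) : ZMod k)
          = ((n + (m + 1) * d : ℕ) : ZMod k) := by push_cast; ring
      rw [this]
  have hx := key (x.val / d) (x.val % d)
  rw [Nat.mod_add_div'] at hx
  rw [ZMod.natCast_rightInverse x] at hx
  exact hx.symm

private lemma aux_val_add_mod {d a : ℕ} (hk : k = d * a) (ha : 0 < a) (x : ZMod k) :
    (x + ((d : ℕ) : ZMod k)).val % d = x.val % d := by
  have hdk : d ∣ k := ⟨a, hk⟩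
  have hdk' : d ≤ k := Nat.le_of_dvd (NeZero.pos k) hdk
  have h0 : d % k % d = 0 := by
    rcases eq_or_lt_of_le hdk' with h | h
    · rw [h, Nat.mod_self, Nat.zero_mod]
    · rw [Nat.mod_eq_of_lt h, Nat.mod_self]
  rw [ZMod.val_add, Nat.mod_mod_of_dvd _ hdk, ZMod.val_natCast, Nat.add_mod, h0, Nat.add_zero,
    Nat.mod_mod_of_dvd x.val dvd_rfl]

private lemma aux_forward {d a t : ℕ} (hk : k = d * a) (hd : 0 < d) (ha : 0 < a)
    {A : Finset (ZMod k)} (hcard : A.card = t) (h0 : (0 : ZMod k) ∈ A)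
    (hA : A.image (· + ((d : ℕ) : ZMod k)) = A) :
    A = Finset.univ.filter (fun x : ZMod k =>
        x.val % d ∈ insert 0 ((Finset.Ico 1 d).filter (fun n => ((n : ℕ) : ZMod k) ∈ A)))
    ∧ a * (1 + ((Finset.Ico 1 d).filter (fun n => ((n : ℕ) : ZMod k) ∈ A)).card) = t := by
  set I : Finset ℕ := (Finset.Ico 1 d).filter (fun n => ((n : ℕ) : ZMod k) ∈ A) with hI
  have hCeq : insert 0 I = (Finset.range d).filter (fun n => ((n : ℕ) : ZMod k) ∈ A) := by
    ext n
    simp only [Finset.mem_insert, hI, Finset.mem_filter, Finset.mem_Ico, Finset.mem_range]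
    constructor
    · rintro (rfl | ⟨⟨h1, h2⟩, h3⟩)
      · exact ⟨hd, by simpa using h0⟩
      · exact ⟨h2, h3⟩
    · rintro ⟨h1, h2⟩
      rcases Nat.eq_zero_or_pos n with rfl | hn
      · exact Or.inl rfl
      · exact Or.inr ⟨⟨hn, h1⟩, h2⟩
  have hAeq : A = Finset.univ.filter (fun x : ZMod k => x.val % d ∈ insert 0 I) := by
    ext x
    simp only [Finset.mem_filter, Finset.mem_univ, true_and, hCeq, Finset.mem_range]
    constructor
    · intro hx
      exact ⟨Nat.mod_lt _ hd, (aux_mem_shift hk hA x).mp hx⟩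
    · intro ⟨h1, h2⟩
      exact (aux_mem_shift hk hA x).mpr h2
  refine ⟨hAeq, ?_⟩
  have h0I : 0 ∉ I := by simp [hI]
  have hsub : insert 0 I ⊆ Finset.range d := by rw [hCeq]; exact Finset.filter_subset _ _
  have := aux_card_filter hk (insert 0 I) hsub
  rw [← hAeq, hcard] at this
  rw [Finset.card_insert_of_notMem h0I] at this
  rw [Nat.add_comm 1 I.card]
  exact this.symm

end Aux

/-- The number of `t`-element subsets of `ZMod k` containing `0` and invariant under
translation by `k / a` is `C(k/a − 1, t/a − 1)`. -/
theorem card_invariant_subsets (k t a : ℕ) [NeZero k] (ht : 0 < t) (ha : 0 < a)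
    (htk : t ≤ k) (hak : a ∣ k) (hat : a ∣ t) :
    (Finset.univ.filter (fun A : Finset (ZMod k) =>
        A.card = t ∧ (0 : ZMod k) ∈ A ∧ A.image (· + ((k / a : ℕ) : ZMod k)) = A)).card
      = Nat.choose (k / a - 1) (t / a - 1) := by
  have hkpos : 0 < k := NeZero.pos k
  set d := k / a with hdd
  set s := t / a with hss
  have hk : k = d * a := (Nat.div_mul_cancel hak).symm
  have hdpos : 0 < d := Nat.div_pos (Nat.le_of_dvd hkpos hak) ha
  have hspos : 0 < s := Nat.div_pos (Nat.le_of_dvd ht hat) ha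
  have hts : t = a * s := (Nat.mul_div_cancel' hat).symm
  have hdk : d ≤ k := hk ▸ Nat.le_mul_of_pos_right d ha
  have hrhs : Nat.choose (d - 1) (s - 1) = ((Finset.Ico 1 d).powersetCard (s - 1)).card := by
    rw [Finset.card_powersetCard, Nat.card_Ico]
  rw [hrhs]
  refine Finset.card_nbij'
    (fun A => (Finset.Ico 1 d).filter (fun n => ((n : ℕ) : ZMod k) ∈ A))
    (fun B => Finset.univ.filter (fun x : ZMod k => x.val % d ∈ insert 0 B)) ?_ ?_ ?_ ?_
  · -- i maps into powersetCard
    intro A hA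
    simp only [Finset.mem_coe, Finset.mem_filter, Finset.mem_univ, true_and] at hA
    obtain ⟨hcard, h0, hinv⟩ := hA
    obtain ⟨-, hc⟩ := aux_forward hk hdpos ha hcard h0 hinv
    rw [Finset.mem_coe, Finset.mem_powersetCard]
    refine ⟨Finset.filter_subset _ _, ?_⟩
    rw [hts] at hc
    have h2 := Nat.eq_of_mul_eq_mul_left ha hc
    show ((Finset.Ico 1 d).filter (fun n => ((n : ℕ) : ZMod k) ∈ A)).card = s - 1
    omega
  · -- j maps into the big set
    intro B hB
    rw [Finset.mem_coe, Finset.mem_powersetCard] at hB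
    obtain ⟨hBsub, hBcard⟩ := hB
    have h0B : 0 ∉ B := fun h => by simpa using hBsub h
    have hsub : insert 0 B ⊆ Finset.range d := by
      intro n hn
      rcases Finset.mem_insert.mp hn with rfl | hn
      · exact Finset.mem_range.mpr hdpos
      · exact Finset.mem_range.mpr (Finset.mem_Ico.mp (hBsub hn)).2
    simp only [Finset.mem_coe, Finset.mem_filter, Finset.mem_univ, true_and]
    refine ⟨?_, ?_, ?_⟩
    · rw [aux_card_filter hk (insert 0 B) hsub, Finset.card_insert_of_notMem h0B, hBcard, hts]
      congr 1
      omega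
    · simp only [Finset.mem_filter, Finset.mem_univ, true_and, ZMod.val_zero,
        Nat.zero_mod]
      exact Finset.mem_insert_self 0 B
    · ext y
      simp only [Finset.mem_image, Finset.mem_filter, Finset.mem_univ, true_and]
      constructor
      · rintro ⟨x, hx, rfl⟩
        rwa [aux_val_add_mod hk ha]
      · intro hy
        refine ⟨y - ((d : ℕ) : ZMod k), ?_, by ring⟩
        have := aux_val_add_mod hk ha (y - ((d : ℕ) : ZMod k))
        rw [sub_add_cancel] at this
        rwa [← this]
  · -- left inverse
    intro A hA
    simp only [Finset.mem_coe, Finset.mem_filter, Finset.mem_univ, true_and] at hA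
    obtain ⟨hcard, h0, hinv⟩ := hA
    obtain ⟨hAeq, -⟩ := aux_forward hk hdpos ha hcard h0 hinv
    exact hAeq.symm
  · -- right inverse
    intro B hB
    rw [Finset.mem_coe, Finset.mem_powersetCard] at hB
    obtain ⟨hBsub, hBcard⟩ := hB
    ext n
    simp only [Finset.mem_filter, Finset.mem_Ico, Finset.mem_univ, true_and]
    constructor
    · rintro ⟨⟨h1, h2⟩, h3⟩
      have hval : ((n : ℕ) : ZMod k).val % d = n := by
        rw [ZMod.val_natCast, Nat.mod_eq_of_lt (lt_of_lt_of_le h2 hdk), Nat.mod_eq_of_lt h2]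
      rw [hval] at h3
      rcases Finset.mem_insert.mp h3 with rfl | h
      · omega
      · exact h
    · intro hn
      have hmem := Finset.mem_Ico.mp (hBsub hn)
      have hval : ((n : ℕ) : ZMod k).val % d = n := by
        rw [ZMod.val_natCast, Nat.mod_eq_of_lt (lt_of_lt_of_le hmem.2 hdk), Nat.mod_eq_of_lt hmem.2]
      refine ⟨hmem, ?_⟩
      rw [hval]
      exact Finset.mem_insert_of_mem hn
end

section
/- Let l, d, k be positive integers with d ≤ l, k dividing l, and l dividing d·k. Set t = d·k/l and let p_1^{n_1}···p_m^{n_m} be the prime factorization of gcd(k, t) with M = {1,...,m}. Then the number of orbits of size exactly k of the shift map on d-element subsets of ZMod l equals (1/t) ∑_{S ⊆ M} (−1)^{|S|} C(k/∏_{i∈S} p_i − 1, t/∏_{i∈S} p_i − 1). -/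
namespace NorbProof

open Finset Function

variable {l : ℕ} [NeZero l]

lemma sh_iterate (i : ℕ) (A : Finset (ZMod l)) :
    (sh l)^[i] A = A.image (· + (i : ZMod l)) := by
  induction i with
  | zero => simp
  | succ n ih =>
    rw [Function.iterate_succ_apply', ih, sh, Finset.image_image]
    congr 1
    funext x
    push_cast
    simp [add_assoc]

lemma isPeriodic_l (A : Finset (ZMod l)) : IsPeriodicPt (sh l) l A := by
  show (sh l)^[l] A = A
  rw [sh_iterate]
  simp

lemma card_sh_iterate (i : ℕ) (A : Finset (ZMod l)) :
    ((sh l)^[i] A).card = A.card := by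
  rw [sh_iterate]
  exact Finset.card_image_of_injective _ (add_left_injective _)

lemma image_add_eq_iff (c : ZMod l) (A : Finset (ZMod l)) :
    A.image (· + c) = A ↔ ∀ x, x + c ∈ A ↔ x ∈ A := by
  constructor
  · intro h x
    constructor
    · intro hx
      rw [← h] at hx
      rcases Finset.mem_image.mp hx with ⟨y, hy, hyc⟩
      have : y = x := by
        have := add_right_cancel hyc
        exact this
      rwa [← this]
    · intro hx
      rw [← h]
      exact Finset.mem_image.mpr ⟨x, hx, rfl⟩
  · intro h
    ext z
    simp only [Finset.mem_image]
    constructor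
    · rintro ⟨y, hy, rfl⟩
      exact (h y).mpr hy
    · intro hz
      refine ⟨z - c, (h (z - c)).mp ?_, sub_add_cancel z c⟩
      rwa [sub_add_cancel]

lemma mem_shOrbit_self (A : Finset (ZMod l)) : A ∈ shOrbit l A :=
  Finset.mem_image.mpr ⟨0, Finset.mem_range.mpr (NeZero.pos l), rfl⟩

lemma shOrbit_card (A : Finset (ZMod l)) :
    (shOrbit l A).card = minimalPeriod (sh l) A := by
  have hp : IsPeriodicPt (sh l) l A := isPeriodic_l A
  have hpos : 0 < minimalPeriod (sh l) A := hp.minimalPeriod_pos (NeZero.pos l)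
  have hdvd : minimalPeriod (sh l) A ∣ l := hp.minimalPeriod_dvd
  have hle : minimalPeriod (sh l) A ≤ l := Nat.le_of_dvd (NeZero.pos l) hdvd
  have heq : shOrbit l A
      = (Finset.range (minimalPeriod (sh l) A)).image (fun i => (sh l)^[i] A) := by
    apply Finset.Subset.antisymm
    · intro B hB
      rcases Finset.mem_image.mp hB with ⟨i, _, rfl⟩
      exact Finset.mem_image.mpr ⟨i % minimalPeriod (sh l) A,
        Finset.mem_range.mpr (Nat.mod_lt _ hpos), iterate_mod_minimalPeriod_eq⟩
    · exact Finset.image_subset_image (Finset.range_subset_range.mpr hle)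
  rw [heq, Finset.card_image_of_injOn, Finset.card_range]
  rw [Finset.coe_range]
  exact iterate_injOn_Iio_minimalPeriod

lemma shOrbit_eq_of_mem {A B : Finset (ZMod l)} (h : B ∈ shOrbit l A) :
    shOrbit l B = shOrbit l A := by
  have hsub : ∀ {X Y : Finset (ZMod l)}, Y ∈ shOrbit l X → shOrbit l Y ⊆ shOrbit l X := by
    intro X Y hY
    rcases Finset.mem_image.mp hY with ⟨i, _, rfl⟩
    intro Z hZ
    rcases Finset.mem_image.mp hZ with ⟨m, _, rfl⟩
    have hp : IsPeriodicPt (sh l) l X := isPeriodic_l X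
    have hpos : 0 < minimalPeriod (sh l) X := hp.minimalPeriod_pos (NeZero.pos l)
    have hle : minimalPeriod (sh l) X ≤ l := Nat.le_of_dvd (NeZero.pos l) hp.minimalPeriod_dvd
    refine Finset.mem_image.mpr ⟨(m + i) % minimalPeriod (sh l) X,
      Finset.mem_range.mpr (lt_of_lt_of_le (Nat.mod_lt _ hpos) hle), ?_⟩
    rw [iterate_mod_minimalPeriod_eq, Function.iterate_add_apply]
  rcases Finset.mem_image.mp h with ⟨i, hi, rfl⟩
  rcases Nat.eq_zero_or_pos i with rfl | hipos
  · simp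
  · apply Finset.Subset.antisymm (hsub h)
    apply hsub
    have hA : (sh l)^[l - i] ((sh l)^[i] A) = A := by
      rw [← Function.iterate_add_apply, Nat.sub_add_cancel (le_of_lt (Finset.mem_range.mp hi))]
      exact isPeriodic_l A
    have hil : l - i < l := by
      have := Finset.mem_range.mp hi
      omega
    exact Finset.mem_image.mpr ⟨l - i, Finset.mem_range.mpr hil, hA⟩

lemma card_of_mem_shOrbit {A B : Finset (ZMod l)} (h : B ∈ shOrbit l A) :
    B.card = A.card := by
  rcases Finset.mem_image.mp h with ⟨i, _, rfl⟩
  exact card_sh_iterate i A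

variable (l) in
/-- number of `d`-subsets fixed by the `j`-fold shift -/
noncomputable def fixCnt (d j : ℕ) : ℕ :=
  (Finset.univ.filter
    (fun A : Finset (ZMod l) => A.card = d ∧ (sh l)^[j] A = A)).card

variable (l) in
/-- number of `d`-subsets with minimal period `j` -/
noncomputable def perCnt (d j : ℕ) : ℕ :=
  (Finset.univ.filter
    (fun A : Finset (ZMod l) => A.card = d ∧ minimalPeriod (sh l) A = j)).card

lemma norb_eq (d k : ℕ) : k * norb l d k = perCnt l d k := by
  classical
  set s := Finset.univ.filter
    (fun A : Finset (ZMod l) => A.card = d ∧ minimalPeriod (sh l) A = k) with hs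
  have step1 : ((Finset.univ.filter (fun A : Finset (ZMod l) => A.card = d)).image
      (shOrbit l)).filter (fun O => O.card = k) = s.image (shOrbit l) := by
    ext O
    simp only [Finset.mem_filter, Finset.mem_image, hs, Finset.mem_univ, true_and]
    constructor
    · rintro ⟨⟨A, hA, rfl⟩, hOk⟩
      exact ⟨A, ⟨hA, by rw [← shOrbit_card A, hOk]⟩, rfl⟩
    · rintro ⟨A, ⟨hA, hper⟩, rfl⟩
      exact ⟨⟨A, hA, rfl⟩, by rw [shOrbit_card A, hper]⟩
  have hmaps : ∀ A ∈ s, shOrbit l A ∈ s.image (shOrbit l) := fun A hA =>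
    Finset.mem_image_of_mem _ hA
  have step2 := Finset.card_eq_sum_card_fiberwise hmaps
  have hfiber : ∀ O ∈ s.image (shOrbit l),
      (s.filter (fun B => shOrbit l B = O)).card = k := by
    intro O hO
    rcases Finset.mem_image.mp hO with ⟨A, hA, rfl⟩
    rw [Finset.mem_filter] at hA
    obtain ⟨-, hAd, hAk⟩ := hA
    have hOcard : (shOrbit l A).card = k := by rw [shOrbit_card A, hAk]
    have : s.filter (fun B => shOrbit l B = shOrbit l A) = shOrbit l A := by
      ext B
      simp only [Finset.mem_filter, hs, Finset.mem_univ, true_and]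
      constructor
      · rintro ⟨-, hBO⟩
        rw [← hBO]
        exact mem_shOrbit_self B
      · intro hB
        have h1 : shOrbit l B = shOrbit l A := shOrbit_eq_of_mem hB
        have h2 : B.card = d := by rw [card_of_mem_shOrbit hB, hAd]
        have h3 : minimalPeriod (sh l) B = k := by
          rw [← shOrbit_card B, h1, hOcard]
        exact ⟨⟨h2, h3⟩, h1⟩
    rw [this, hOcard]
  rw [Finset.sum_congr rfl hfiber, Finset.sum_const, smul_eq_mul] at step2
  rw [norb, step1, perCnt, ← hs, step2, mul_comm]

lemma fix_eq_sum (d n : ℕ) (hn : 0 < n) :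
    fixCnt l d n = ∑ i ∈ n.divisors, perCnt l d i := by
  classical
  have hmaps : ∀ A ∈ Finset.univ.filter
      (fun A : Finset (ZMod l) => A.card = d ∧ (sh l)^[n] A = A),
      minimalPeriod (sh l) A ∈ n.divisors := by
    intro A hA
    rw [Finset.mem_filter] at hA
    exact Nat.mem_divisors.mpr
      ⟨isPeriodicPt_iff_minimalPeriod_dvd.mp hA.2.2, hn.ne'⟩
  have step := Finset.card_eq_sum_card_fiberwise hmaps
  rw [fixCnt, step]
  apply Finset.sum_congr rfl
  intro i hi
  congr 1
  ext A
  simp only [Finset.mem_filter, Finset.mem_univ, true_and]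
  constructor
  · rintro ⟨⟨h1, -⟩, h2⟩
    exact ⟨h1, h2⟩
  · rintro ⟨h1, h2⟩
    refine ⟨⟨h1, ?_⟩, h2⟩
    exact isPeriodicPt_iff_minimalPeriod_dvd.mpr (h2 ▸ (Nat.mem_divisors.mp hi).1)


lemma inv_step {A : Finset (ZMod l)} {j : ℕ}
    (hA : ∀ x : ZMod l, x + (j : ZMod l) ∈ A ↔ x ∈ A) (m : ℕ) (x : ZMod l) :
    x + (m : ℕ) * (j : ZMod l) ∈ A ↔ x ∈ A := by
  induction m with
  | zero => simp
  | succ n ih =>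
    have h : x + ((n + 1 : ℕ) : ZMod l) * (j : ZMod l)
        = (x + (n : ℕ) * (j : ZMod l)) + (j : ZMod l) := by push_cast; ring
    rw [h, hA, ih]

lemma mem_congr_of_inv {A : Finset (ZMod l)} {j : ℕ} (hj : j ∣ l)
    (hA : ∀ x : ZMod l, x + (j : ZMod l) ∈ A ↔ x ∈ A) {x y : ZMod l}
    (hxy : x.val ≡ y.val [MOD j]) : (x ∈ A ↔ y ∈ A) := by
  have hle : x.val ≤ y.val + l :=
    le_of_lt (lt_of_lt_of_le (ZMod.val_lt x) (Nat.le_add_left _ _))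
  have h2 : x.val ≡ y.val + l [MOD j] := by
    refine hxy.trans ((Nat.modEq_iff_dvd' (Nat.le_add_right _ _)).mpr ?_)
    simpa using hj
  obtain ⟨m, hm⟩ := (Nat.modEq_iff_dvd' hle).mp h2
  have hy : ((x.val + j * m : ℕ) : ZMod l) = y := by
    rw [← hm, Nat.add_sub_cancel' hle]
    push_cast
    simp [ZMod.natCast_self, ZMod.natCast_val, ZMod.cast_id]
  have hxm : x + (m : ℕ) * (j : ZMod l) = y := by
    rw [← hy]
    push_cast
    rw [ZMod.natCast_val, ZMod.cast_id]
    ring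
  rw [← hxm]
  exact (inv_step hA m x).symm

lemma pi_eq {j : ℕ} (hj : j ∣ l) (x : ZMod l) :
    (ZMod.castHom hj (ZMod j)) x = (x.val : ZMod j) := by
  have h : ((x.val : ℕ) : ZMod l) = x := by rw [ZMod.natCast_val, ZMod.cast_id]
  rw [← h, map_natCast]
  rw [h]

lemma pi_add_j {j : ℕ} (hj : j ∣ l) (x : ZMod l) :
    (((x + (j : ZMod l)).val : ZMod j)) = (x.val : ZMod j) := by
  rw [← pi_eq hj, ← pi_eq hj x, map_add, map_natCast, ZMod.natCast_self, add_zero]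

lemma pi_surj_val {j : ℕ} (hj : j ∣ l) [NeZero j] (b : ZMod j) :
    ((((b.val : ℕ) : ZMod l)).val : ZMod j) = b := by
  rw [← pi_eq hj, map_natCast, ZMod.natCast_val, ZMod.cast_id]

lemma fiber_card {j : ℕ} (hj : j ∣ l) (hj0 : j ≠ 0) (b : ZMod j) :
    (Finset.univ.filter (fun x : ZMod l => (x.val : ZMod j) = b)).card = l / j := by
  haveI : NeZero j := ⟨hj0⟩
  rw [← Finset.card_range (l / j)]
  apply Finset.card_nbij' (fun x => x.val / j) (fun i => ((b.val + j * i : ℕ) : ZMod l))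
  · intro x hx
    exact Finset.mem_range.mpr (Nat.div_lt_div_of_lt_of_dvd hj (ZMod.val_lt x))
  · intro i hi
    have hi' := Finset.mem_range.mp hi
    have hlt : b.val + j * i < l := by
      have h1 : b.val < j := ZMod.val_lt b
      have h2 : j * (i + 1) ≤ j * (l / j) := Nat.mul_le_mul_left _ hi'
      have h3 : j * (l / j) = l := Nat.mul_div_cancel' hj
      have h4 : j * i + j ≤ l := by rw [← Nat.mul_succ]; rw [h3] at h2; exact h2
      omega
    refine Finset.mem_filter.mpr ⟨Finset.mem_univ _, ?_⟩
    rw [ZMod.val_natCast, Nat.mod_eq_of_lt hlt]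
    push_cast
    simp [ZMod.natCast_self, ZMod.natCast_val, ZMod.cast_id]
  · intro x hx
    have hx' := (Finset.mem_filter.mp hx).2
    have hmod : x.val % j = b.val := by
      have := congrArg ZMod.val hx'
      rwa [ZMod.val_natCast] at this
    dsimp only
    rw [← hmod, Nat.mod_add_div, ZMod.natCast_val, ZMod.cast_id]
  · intro i hi
    have hi' := Finset.mem_range.mp hi
    have hlt : b.val + j * i < l := by
      have h1 : b.val < j := ZMod.val_lt b
      have h2 : j * (i + 1) ≤ j * (l / j) := Nat.mul_le_mul_left _ hi'
      have h3 : j * (l / j) = l := Nat.mul_div_cancel' hj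
      have h4 : j * i + j ≤ l := by rw [← Nat.mul_succ]; rw [h3] at h2; exact h2
      omega
    dsimp only
    rw [ZMod.val_natCast, Nat.mod_eq_of_lt hlt,
      Nat.add_mul_div_left _ _ (Nat.pos_of_ne_zero hj0),
      Nat.div_eq_of_lt (ZMod.val_lt b), zero_add]

lemma filter_pi_card {j : ℕ} (hj : j ∣ l) (hj0 : j ≠ 0) (B : Finset (ZMod j)) :
    (Finset.univ.filter (fun x : ZMod l => (x.val : ZMod j) ∈ B)).card
      = (l / j) * B.card := by
  haveI : NeZero j := ⟨hj0⟩
  classical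
  have hmaps : ∀ x ∈ Finset.univ.filter (fun x : ZMod l => (x.val : ZMod j) ∈ B),
      ((x.val : ZMod j)) ∈ B := fun x hx => (Finset.mem_filter.mp hx).2
  rw [Finset.card_eq_sum_card_fiberwise hmaps]
  have heach : ∀ b ∈ B,
      ((Finset.univ.filter (fun x : ZMod l => (x.val : ZMod j) ∈ B)).filter
        (fun x => (x.val : ZMod j) = b)).card = l / j := by
    intro b hb
    rw [← fiber_card hj hj0 b]
    congr 1
    ext x
    simp only [Finset.mem_filter, Finset.mem_univ, true_and]
    constructor
    · rintro ⟨-, h⟩; exact h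
    · intro h; exact ⟨h ▸ hb, h⟩
  rw [Finset.sum_congr rfl heach, Finset.sum_const, smul_eq_mul, mul_comm]

lemma filter_image_eq {j : ℕ} (hj : j ∣ l) {A : Finset (ZMod l)}
    (hinv : ∀ x : ZMod l, x + (j : ZMod l) ∈ A ↔ x ∈ A) :
    Finset.univ.filter (fun x : ZMod l =>
      (x.val : ZMod j) ∈ A.image (fun y : ZMod l => (y.val : ZMod j))) = A := by
  classical
  ext x
  simp only [Finset.mem_filter, Finset.mem_univ, true_and, Finset.mem_image]
  constructor
  · rintro ⟨y, hy, hyx⟩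
    have hxy : x.val ≡ y.val [MOD j] := by
      rw [← ZMod.natCast_eq_natCast_iff]
      exact hyx.symm
    exact (mem_congr_of_inv hj hinv hxy).mpr hy
  · intro hx
    exact ⟨x, hx, rfl⟩

lemma fixCnt_eq {d j : ℕ} (hj : j ∣ l) (hdj : l ∣ d * j) :
    fixCnt l d j = Nat.choose j (d * j / l) := by
  classical
  have hl0 : l ≠ 0 := NeZero.ne l
  have hj0 : j ≠ 0 := by rintro rfl; exact hl0 (zero_dvd_iff.mp hj)
  haveI : NeZero j := ⟨hj0⟩
  set u := d * j / l with hu'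
  have hu : l * u = d * j := Nat.mul_div_cancel' hdj
  have hcard : Nat.choose j u = ((Finset.univ : Finset (ZMod j)).powersetCard u).card := by
    rw [Finset.card_powersetCard, Finset.card_univ, ZMod.card]
  rw [fixCnt, hcard]
  apply Finset.card_nbij' (fun A => A.image (fun x : ZMod l => (x.val : ZMod j)))
    (fun B => Finset.univ.filter (fun x : ZMod l => (x.val : ZMod j) ∈ B))
  · intro A hA
    rw [Finset.mem_coe, Finset.mem_filter] at hA
    obtain ⟨-, hAd, hAfix⟩ := hA
    have hinv : ∀ x : ZMod l, x + (j : ZMod l) ∈ A ↔ x ∈ A := by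
      rw [sh_iterate] at hAfix
      exact (image_add_eq_iff _ _).mp hAfix
    have hc := filter_pi_card hj hj0 (A.image (fun x : ZMod l => (x.val : ZMod j)))
    rw [filter_image_eq hj hinv, hAd] at hc
    have himg : (A.image (fun x : ZMod l => (x.val : ZMod j))).card = u := by
      have h1 : l * (A.image (fun x : ZMod l => (x.val : ZMod j))).card = l * u := by
        calc l * (A.image (fun x : ZMod l => (x.val : ZMod j))).card
            = (l / j) * j * (A.image (fun x : ZMod l => (x.val : ZMod j))).card := by
              rw [Nat.div_mul_cancel hj]
          _ = (l / j) * (A.image (fun x : ZMod l => (x.val : ZMod j))).card * j := by ring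
          _ = d * j := by rw [← hc]
          _ = l * u := hu.symm
      exact Nat.eq_of_mul_eq_mul_left (Nat.pos_of_ne_zero hl0) h1
    exact Finset.mem_powersetCard.mpr ⟨Finset.subset_univ _, himg⟩
  · intro B hB
    obtain ⟨-, hBu⟩ := Finset.mem_powersetCard.mp hB
    refine Finset.mem_filter.mpr ⟨Finset.mem_univ _, ?_, ?_⟩
    · rw [filter_pi_card hj hj0 B, hBu]
      have h1 : (l / j) * u * j = d * j := by
        calc (l / j) * u * j = (l / j) * j * u := by ring
          _ = l * u := by rw [Nat.div_mul_cancel hj]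
          _ = d * j := hu
      exact Nat.eq_of_mul_eq_mul_right (Nat.pos_of_ne_zero hj0) h1
    · rw [sh_iterate]
      apply (image_add_eq_iff _ _).mpr
      intro x
      simp only [Finset.mem_filter, Finset.mem_univ, true_and]
      rw [pi_add_j hj]
  · intro A hA
    rw [Finset.mem_coe, Finset.mem_filter] at hA
    obtain ⟨-, hAd, hAfix⟩ := hA
    have hinv : ∀ x : ZMod l, x + (j : ZMod l) ∈ A ↔ x ∈ A := by
      rw [sh_iterate] at hAfix
      exact (image_add_eq_iff _ _).mp hAfix
    exact filter_image_eq hj hinv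
  · intro B hB
    ext b
    simp only [Finset.mem_image, Finset.mem_filter, Finset.mem_univ, true_and]
    constructor
    · rintro ⟨x, hx, rfl⟩; exact hx
    · intro hb
      refine ⟨((b.val : ℕ) : ZMod l), ?_, pi_surj_val hj b⟩
      rw [pi_surj_val hj b]
      exact hb

lemma fixCnt_eq_zero {d j : ℕ} (hj : j ∣ l) (hdj : ¬ l ∣ d * j) :
    fixCnt l d j = 0 := by
  classical
  have hl0 : l ≠ 0 := NeZero.ne l
  have hj0 : j ≠ 0 := by rintro rfl; exact hl0 (zero_dvd_iff.mp hj)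
  haveI : NeZero j := ⟨hj0⟩
  rw [fixCnt, Finset.card_eq_zero]
  by_contra h
  obtain ⟨A, hA⟩ := Finset.nonempty_of_ne_empty h
  rw [Finset.mem_filter] at hA
  obtain ⟨-, hAd, hAfix⟩ := hA
  have hinv : ∀ x : ZMod l, x + (j : ZMod l) ∈ A ↔ x ∈ A := by
    rw [sh_iterate] at hAfix
    exact (image_add_eq_iff _ _).mp hAfix
  have hc := filter_pi_card hj hj0 (A.image (fun x : ZMod l => (x.val : ZMod j)))
  rw [filter_image_eq hj hinv, hAd] at hc
  apply hdj
  refine ⟨(A.image (fun x : ZMod l => (x.val : ZMod j))).card, ?_⟩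
  calc d * j = (l / j) * (A.image (fun x : ZMod l => (x.val : ZMod j))).card * j := by
        rw [← hc]
    _ = (l / j) * j * (A.image (fun x : ZMod l => (x.val : ZMod j))).card := by ring
    _ = l * (A.image (fun x : ZMod l => (x.val : ZMod j))).card := by
        rw [Nat.div_mul_cancel hj]

lemma moebius_prod : ∀ (S : Finset ℕ), (∀ p ∈ S, p.Prime) →
    ArithmeticFunction.moebius (S.prod id) = (-1) ^ S.card := by
  classical
  intro S
  induction S using Finset.induction_on with
  | empty => intro _; simp
  | @insert a s ha ih =>
    intro hS
    have hap : a.Prime := hS a (Finset.mem_insert_self a s)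
    have hsp : ∀ p ∈ s, p.Prime := fun p hp => hS p (Finset.mem_insert_of_mem hp)
    have hcop : Nat.Coprime a (s.prod id) := by
      rw [Nat.Prime.coprime_iff_not_dvd hap]
      intro hdvd
      obtain ⟨q, hq, haq⟩ := (Nat.Prime.prime hap).exists_mem_finset_dvd hdvd
      have : a = q := (Nat.prime_dvd_prime_iff_eq hap (hsp q hq)).mp haq
      exact ha (this ▸ hq)
    rw [Finset.prod_insert ha, id_eq,
      ArithmeticFunction.isMultiplicative_moebius.map_mul_of_coprime hcop,
      ArithmeticFunction.moebius_apply_prime hap, ih hsp,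
      Finset.card_insert_of_notMem ha]
    ring

end NorbProof

/-- Main theorem: with `t = d*k/l` and `p_1,…,p_m` the prime factors of `gcd(k,t)`,
the number of orbits of size exactly `k` on `d`-subsets of `ZMod l` equals
`(1/t) ∑_{S ⊆ M} (−1)^{|S|} C(k/∏ p_i − 1, t/∏ p_i − 1)`. -/
theorem norb_formula (l d k : ℕ) [NeZero l] (hd : 0 < d) (hk : 0 < k) (hdl : d ≤ l)
    (hkl : k ∣ l) (hld : l ∣ d * k) :
    ((d * k / l : ℕ) : ℤ) * (norb l d k : ℤ)
      = ∑ S ∈ (Nat.gcd k (d * k / l)).primeFactors.powerset,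
          (-1) ^ S.card *
            (Nat.choose (k / S.prod id - 1) ((d * k / l) / S.prod id - 1) : ℤ) := by
  classical
  have hl0 : l ≠ 0 := NeZero.ne l
  have hlpos : 0 < l := Nat.pos_of_ne_zero hl0
  have hk0 : k ≠ 0 := hk.ne'
  set t := d * k / l with ht
  have hlt : l * t = d * k := Nat.mul_div_cancel' hld
  have ht0 : 0 < t := by
    rcases Nat.eq_zero_or_pos t with h | h
    · rw [h, mul_zero] at hlt
      exact absurd hlt.symm (by positivity)
    · exact h
  have hG : ∀ n > 0, ∑ i ∈ n.divisors, (NorbProof.perCnt l d i : ℤ)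
      = (NorbProof.fixCnt l d n : ℤ) := by
    intro n hn
    rw [NorbProof.fix_eq_sum d n hn]
    push_cast
    rfl
  have hinv := (ArithmeticFunction.sum_eq_iff_sum_mul_moebius_eq.mp hG) k hk
  simp only [Int.cast_id] at hinv
  rw [Nat.sum_divisorsAntidiagonal
    (fun a b => ((ArithmeticFunction.moebius a : ℤ)) * (NorbProof.fixCnt l d b : ℤ))] at hinv
  have hsq : ∑ q ∈ k.divisors with Squarefree q,
      (ArithmeticFunction.moebius q : ℤ) * (NorbProof.fixCnt l d (k / q) : ℤ)
      = ∑ q ∈ k.divisors,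
      (ArithmeticFunction.moebius q : ℤ) * (NorbProof.fixCnt l d (k / q) : ℤ) := by
    apply Finset.sum_filter_of_ne
    intro q hq hne
    by_contra hns
    rw [ArithmeticFunction.moebius_eq_zero_of_not_squarefree hns] at hne
    simp at hne
  rw [← hsq, Nat.sum_divisors_filter_squarefree hk0] at hinv
  have hpf : (UniqueFactorizationMonoid.normalizedFactors (k : ℕ)).toFinset
      = k.primeFactors := by
    rw [Nat.factors_eq]
    simp
  rw [hpf] at hinv
  have hstep : (NorbProof.perCnt l d k : ℤ)
      = ∑ S ∈ k.primeFactors.powerset,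
          (-1) ^ S.card * (NorbProof.fixCnt l d (k / S.prod id) : ℤ) := by
    rw [← hinv]
    apply Finset.sum_congr rfl
    intro S hS
    have hSp : ∀ p ∈ S, p.Prime := fun p hp =>
      Nat.prime_of_mem_primeFactors (Finset.mem_powerset.mp hS hp)
    rw [Finset.prod_val, NorbProof.moebius_prod S hSp]
  have hgcd0 : Nat.gcd k t ≠ 0 := fun h => hk0 (Nat.eq_zero_of_gcd_eq_zero_left h)
  have hsub : (Nat.gcd k t).primeFactors.powerset ⊆ k.primeFactors.powerset :=
    Finset.powerset_mono.mpr (Nat.primeFactors_mono (Nat.gcd_dvd_left k t) hk0)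
  have hvanish : ∀ S ∈ k.primeFactors.powerset,
      S ∉ (Nat.gcd k t).primeFactors.powerset →
      (-1 : ℤ) ^ S.card * (NorbProof.fixCnt l d (k / S.prod id) : ℤ) = 0 := by
    intro S hS hSn
    have hSsub := Finset.mem_powerset.mp hS
    have hqk : S.prod id ∣ k :=
      dvd_trans (Finset.prod_dvd_prod_of_subset S k.primeFactors id hSsub)
        (Nat.prod_primeFactors_dvd k)
    obtain ⟨p, hpS, hpn⟩ := Finset.not_subset.mp
      (fun hc => hSn (Finset.mem_powerset.mpr hc))
    have hpk := hSsub hpS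
    have hpprime := Nat.prime_of_mem_primeFactors hpk
    have hpt : ¬ p ∣ t := by
      intro hpt
      exact hpn (Nat.mem_primeFactors.mpr
        ⟨hpprime, Nat.dvd_gcd (Nat.dvd_of_mem_primeFactors hpk) hpt, hgcd0⟩)
    have hqnt : ¬ S.prod id ∣ t := fun hqt =>
      hpt (dvd_trans (Finset.dvd_prod_of_mem id hpS) hqt)
    have hjl : k / S.prod id ∣ l := dvd_trans (Nat.div_dvd_of_dvd hqk) hkl
    have hndvd : ¬ l ∣ d * (k / S.prod id) := by
      rintro ⟨s, hs⟩
      apply hqnt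
      have h1 : l * t = l * (s * S.prod id) := by
        calc l * t = d * k := hlt
          _ = d * ((k / S.prod id) * S.prod id) := by rw [Nat.div_mul_cancel hqk]
          _ = (d * (k / S.prod id)) * S.prod id := by ring
          _ = (l * s) * S.prod id := by rw [← hs]
          _ = l * (s * S.prod id) := by ring
      have h2 := Nat.eq_of_mul_eq_mul_left hlpos h1
      exact ⟨s, by rw [h2]; ring⟩
    rw [NorbProof.fixCnt_eq_zero hjl hndvd]
    simp
  rw [← Finset.sum_subset hsub hvanish] at hstep
  have hfinal : (NorbProof.perCnt l d k : ℤ)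
      = ∑ S ∈ (Nat.gcd k t).primeFactors.powerset,
          (-1) ^ S.card * (Nat.choose (k / S.prod id) (t / S.prod id) : ℤ) := by
    rw [hstep]
    apply Finset.sum_congr rfl
    intro S hS
    have hq : S.prod id ∣ Nat.gcd k t := dvd_trans
      (Finset.prod_dvd_prod_of_subset S _ id (Finset.mem_powerset.mp hS))
      (Nat.prod_primeFactors_dvd _)
    have hqk : S.prod id ∣ k := hq.trans (Nat.gcd_dvd_left k t)
    have hqt : S.prod id ∣ t := hq.trans (Nat.gcd_dvd_right k t)
    have hq0 : S.prod id ≠ 0 := by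
      intro h
      rw [h] at hqt
      exact ht0.ne' (zero_dvd_iff.mp hqt)
    have hjl : k / S.prod id ∣ l := dvd_trans (Nat.div_dvd_of_dvd hqk) hkl
    have heq : d * (k / S.prod id) = l * (t / S.prod id) := by
      apply Nat.eq_of_mul_eq_mul_right (Nat.pos_of_ne_zero hq0)
      calc d * (k / S.prod id) * S.prod id = d * k := by
            rw [mul_assoc, Nat.div_mul_cancel hqk]
        _ = l * t := hlt.symm
        _ = l * ((t / S.prod id) * S.prod id) := by rw [Nat.div_mul_cancel hqt]
        _ = l * (t / S.prod id) * S.prod id := by ring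
    have hdvd : l ∣ d * (k / S.prod id) := ⟨t / S.prod id, heq⟩
    have hdiv : d * (k / S.prod id) / l = t / S.prod id := by
      rw [heq, Nat.mul_div_cancel_left _ hlpos]
    rw [NorbProof.fixCnt_eq hjl hdvd, hdiv]
  have hnorb : (k : ℤ) * (norb l d k : ℤ) = (NorbProof.perCnt l d k : ℤ) := by
    exact_mod_cast NorbProof.norb_eq d k
  apply mul_left_cancel₀ (show (k : ℤ) ≠ 0 from Int.natCast_ne_zero.mpr hk0)
  rw [show (k:ℤ) * ((t:ℤ) * (norb l d k : ℤ))
      = (t:ℤ) * ((k:ℤ) * (norb l d k : ℤ)) by ring,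
    hnorb, hfinal, Finset.mul_sum, Finset.mul_sum]
  apply Finset.sum_congr rfl
  intro S hS
  have hq : S.prod id ∣ Nat.gcd k t := dvd_trans
    (Finset.prod_dvd_prod_of_subset S _ id (Finset.mem_powerset.mp hS))
    (Nat.prod_primeFactors_dvd _)
  have hqk : S.prod id ∣ k := hq.trans (Nat.gcd_dvd_left k t)
  have hqt : S.prod id ∣ t := hq.trans (Nat.gcd_dvd_right k t)
  have ha' : 0 < k / S.prod id := Nat.div_pos (Nat.le_of_dvd hk hqk)
    (Nat.pos_of_ne_zero (by intro h; rw [h] at hqk; exact hk0 (zero_dvd_iff.mp hqk)))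
  have hb' : 0 < t / S.prod id := Nat.div_pos (Nat.le_of_dvd ht0 hqt)
    (Nat.pos_of_ne_zero (by intro h; rw [h] at hqt; exact ht0.ne' (zero_dvd_iff.mp hqt)))
  have hid : t * Nat.choose (k / S.prod id) (t / S.prod id)
      = k * Nat.choose (k / S.prod id - 1) (t / S.prod id - 1) := by
    set a := k / S.prod id with hadef
    set b := t / S.prod id with hbdef
    have hsucc := Nat.add_one_mul_choose_eq (a - 1) (b - 1)
    rw [show a - 1 + 1 = a by omega, show b - 1 + 1 = b by omega] at hsucc
    have htq : b * S.prod id = t := Nat.div_mul_cancel hqt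
    have hkq : a * S.prod id = k := Nat.div_mul_cancel hqk
    calc t * Nat.choose a b = (b * S.prod id) * Nat.choose a b := by rw [htq]
      _ = S.prod id * (Nat.choose a b * b) := by ring
      _ = S.prod id * (a * Nat.choose (a - 1) (b - 1)) := by rw [← hsucc]
      _ = (a * S.prod id) * Nat.choose (a - 1) (b - 1) := by ring
      _ = k * Nat.choose (a - 1) (b - 1) := by rw [hkq]
  rw [mul_left_comm, mul_left_comm ((k : ℕ) : ℤ)]
  congr 1
  exact_mod_cast hid
end
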